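/- Let k be an integer, N a positive integer, and f : ℍ → ℂ a function such that f(γτ) = (cτ+d)^k f(τ) for every γ = (a b; c d) in Γ₁(N) with gcd(a,6) = 1 and ac > 0. Then f(γτ) = (cτ+d)^k f(τ) for every γ in Γ₁(N). -/

import Mathlib

open Matrix UpperHalfPlane
open scoped MatrixGroups

namespace InvarianceFromStar

/-- The cocycle property predicate. -/
def P (k : ℤ) (f : ℍ → ℂ) (γ : SL(2, ℤ)) : Prop :=
  ∀ τ : ℍ, f (γ • τ) = ((γ.1 1 0 : ℂ) * (τ : ℂ) + (γ.1 1 1 : ℂ)) ^ k * f τ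

lemma J_eq (γ : SL(2, ℤ)) (τ : ℍ) :
    ((γ.1 1 0 : ℂ) * (τ : ℂ) + (γ.1 1 1 : ℂ)) = UpperHalfPlane.denom ↑γ τ :=
  (ModularGroup.denom_apply γ τ).symm

lemma coe_mul (γ δ : SL(2, ℤ)) : (↑(γ * δ) : GL(2, ℝ)⁺) = ↑γ * ↑δ := by
  simp [ModularGroup.coe, _root_.map_mul]

lemma denom_cocycle_sl (γ δ : SL(2, ℤ)) (τ : ℍ) :
    UpperHalfPlane.denom ↑(γ * δ) τ =
      UpperHalfPlane.denom ↑γ ((δ • τ : ℍ) : ℂ) * UpperHalfPlane.denom ↑δ τ := by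
  have := denom_cocycle_σ (γ : GL (Fin 2) ℝ) δ τ
  simpa [σ, ModularGroup.sl_moeb] using this

lemma smul_mul (γ δ : SL(2, ℤ)) (τ : ℍ) : (γ * δ) • τ = γ • (δ • τ) :=
  mul_smul γ δ τ

lemma P_mul {k : ℤ} {f : ℍ → ℂ} {γ δ : SL(2, ℤ)} (hγ : P k f γ) (hδ : P k f δ) :
    P k f (γ * δ) := by
  intro τ
  rw [J_eq, denom_cocycle_sl, smul_mul, hγ (δ • τ), hδ τ, J_eq, J_eq, mul_zpow]
  ring

lemma P_cancel {k : ℤ} {f : ℍ → ℂ} {γ δ : SL(2, ℤ)} (hγ : P k f γ) (hγδ : P k f (γ * δ)) :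
    P k f δ := by
  intro τ
  have h1 := hγδ τ
  rw [J_eq, denom_cocycle_sl, smul_mul] at h1
  have h2 := hγ (δ • τ)
  rw [J_eq] at h2
  rw [h2, mul_zpow] at h1
  have hne : (UpperHalfPlane.denom ↑γ ((δ • τ : ℍ) : ℂ)) ^ k ≠ 0 :=
    zpow_ne_zero _ (UpperHalfPlane.denom_ne_zero _ _)
  rw [J_eq]
  exact mul_left_cancel₀ hne (h1.trans (by ring))

/-- Arithmetic: coprime residues mod 6 can be shifted to a unit. -/
lemma exists_gcd_six {a c : ℤ} (h : IsCoprime a c) :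
    ∃ s : ℤ, Int.gcd (a + c * s) 6 = 1 := by
  obtain ⟨u, v, huv⟩ := h
  have key : ∀ x y : ZMod 6, (∃ u v : ZMod 6, u * x + v * y = 1) →
      ∃ s t : ZMod 6, (x + y * s) * t = 1 := by decide
  have hz : ∃ u' v' : ZMod 6, u' * (a : ZMod 6) + v' * (c : ZMod 6) = 1 :=
    ⟨(u : ZMod 6), (v : ZMod 6), by exact_mod_cast congrArg (Int.cast : ℤ → ZMod 6) huv⟩
  obtain ⟨s, t, hst⟩ := key (a : ZMod 6) (c : ZMod 6) hz
  refine ⟨(s.val : ℤ), ?_⟩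
  rw [← Int.isCoprime_iff_gcd_eq_one]
  have h6 : (6 : ℤ) ∣ (a + c * (s.val : ℤ)) * (t.val : ℤ) - 1 := by
    have : (((a + c * (s.val : ℤ)) * (t.val : ℤ) - 1 : ℤ) : ZMod 6) = 0 := by
      push_cast
      simp only [ZMod.natCast_val, ZMod.cast_id]
      rw [hst]; ring
    exact_mod_cast (ZMod.intCast_zmod_eq_zero_iff_dvd _ 6).mp this
  obtain ⟨w, hw⟩ := h6
  exact ⟨(t.val : ℤ), -w, by linarith⟩

end InvarianceFromStar

open InvarianceFromStar

theorem invariance_from_star (k : ℤ) (N : ℕ) (hN : 0 < N) (f : ℍ → ℂ)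
    (h : ∀ γ : SL(2, ℤ), γ ∈ CongruenceSubgroup.Gamma1 N →
      Int.gcd (γ.1 0 0) 6 = 1 → 0 < γ.1 0 0 * γ.1 1 0 →
      ∀ τ : ℍ, f (γ • τ) = ((γ.1 1 0 : ℂ) * (τ : ℂ) + (γ.1 1 1 : ℂ)) ^ k * f τ) :
    ∀ γ : SL(2, ℤ), γ ∈ CongruenceSubgroup.Gamma1 N →
      ∀ τ : ℍ, f (γ • τ) = ((γ.1 1 0 : ℂ) * (τ : ℂ) + (γ.1 1 1 : ℂ)) ^ k * f τ := by
  intro γ hγ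
  -- matrices L m = (1 0; N m 1) and U s = (1 s; 0 1)
  have hLdet : ∀ m : ℤ, Matrix.det !![(1 : ℤ), 0; m, 1] = 1 := by
    intro m; simp [Matrix.det_fin_two_of]
  have hUdet : ∀ s : ℤ, Matrix.det !![(1 : ℤ), s; 0, 1] = 1 := by
    intro s; simp [Matrix.det_fin_two_of]
  set L : ℤ → SL(2, ℤ) := fun m => ⟨!![1, 0; (N : ℤ) * m, 1], hLdet _⟩ with hLdef
  set U : ℤ → SL(2, ℤ) := fun s => ⟨!![1, s; 0, 1], hUdet _⟩ with hUdef
  have hLmem : ∀ m : ℤ, L m ∈ CongruenceSubgroup.Gamma1 N := by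
    intro m
    rw [CongruenceSubgroup.Gamma1_mem]
    refine ⟨by simp [hLdef], by simp [hLdef], ?_⟩
    show (((N : ℤ) * m : ℤ) : ZMod N) = 0
    push_cast
    simp
  have hUmem : ∀ s : ℤ, U s ∈ CongruenceSubgroup.Gamma1 N := by
    intro s
    rw [CongruenceSubgroup.Gamma1_mem]
    exact ⟨by simp [hUdef], by simp [hUdef], by simp [hUdef]⟩
  -- L m is a star element for m > 0
  have hLP : ∀ m : ℤ, 0 < m → P k f (L m) := by
    intro m hm
    apply h _ (hLmem m)
    · simp [hLdef]
    · show (0 : ℤ) < 1 * ((N : ℤ) * m)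
      have : (0 : ℤ) < (N : ℤ) := by exact_mod_cast hN
      nlinarith
  -- L m * U s is a star element for m > 0
  have hLUP : ∀ m s : ℤ, 0 < m → P k f (L m * U s) := by
    intro m s hm
    have hentries : (L m * U s).1 = !![1, s; (N : ℤ) * m, (N : ℤ) * m * s + 1] := by
      show (!![1, 0; (N : ℤ) * m, 1] * !![1, s; 0, 1]) = _
      ext i j
      fin_cases i <;> fin_cases j <;>
        simp [Matrix.mul_apply, Fin.sum_univ_succ] <;> ring
    apply h _ (Subgroup.mul_mem _ (hLmem m) (hUmem s))
    · rw [hentries]; simp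
    · rw [hentries]
      show (0 : ℤ) < 1 * ((N : ℤ) * m)
      have : (0 : ℤ) < (N : ℤ) := by exact_mod_cast hN
      nlinarith
  -- hence U s satisfies P
  have hUP : ∀ s : ℤ, P k f (U s) := fun s =>
    P_cancel (hLP 1 one_pos) (hLUP 1 s one_pos)
  -- notation for the entries of γ
  set a : ℤ := γ.1 0 0 with ha
  set b : ℤ := γ.1 0 1 with hb
  set c : ℤ := γ.1 1 0 with hc
  set d : ℤ := γ.1 1 1 with hd
  have hdet : a * d - b * c = 1 := by
    have := γ.2
    rw [Matrix.det_fin_two] at this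
    exact this
  have hcop : IsCoprime a c := ⟨d, -b, by linarith⟩
  obtain ⟨s, hs⟩ := exists_gcd_six hcop
  set a' : ℤ := a + c * s with ha'
  have ha'ne : a' ≠ 0 := by
    intro h0
    rw [h0] at hs
    simp [Int.gcd] at hs
  -- the shifted matrix γ' = U s * γ
  set γ' : SL(2, ℤ) := U s * γ with hγ'def
  have hγ'entries : γ'.1 = !![a + s * c, b + s * d; c, d] := by
    show (!![1, s; 0, 1] * γ.1) = _
    ext i j
    fin_cases i <;> fin_cases j <;>
      simp [Matrix.mul_apply, Fin.sum_univ_succ, ← ha, ← hb, ← hc, ← hd] <;> ring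
  have hγ'mem : γ' ∈ CongruenceSubgroup.Gamma1 N := Subgroup.mul_mem _ (hUmem s) hγ
  -- choose m large
  set m : ℤ := |a' * c| + 1 with hm
  have hmpos : 0 < m := by positivity
  -- L m * γ' is a star element
  have hLγ'entries : (L m * γ').1 =
      !![a + s * c, b + s * d; (N : ℤ) * m * (a + s * c) + c, (N : ℤ) * m * (b + s * d) + d] := by
    show (!![1, 0; (N : ℤ) * m, 1] * γ'.1) = _
    rw [hγ'entries]
    ext i j
    fin_cases i <;> fin_cases j <;>
      simp [Matrix.mul_apply, Fin.sum_univ_succ] <;> ring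
  have hNpos : (0 : ℤ) < (N : ℤ) := by exact_mod_cast hN
  have hLγ'P : P k f (L m * γ') := by
    apply h _ (Subgroup.mul_mem _ (hLmem m) hγ'mem)
    · rw [hLγ'entries]
      show Int.gcd (a + s * c) 6 = 1
      rwa [show a + s * c = a' by rw [ha']; ring]
    · rw [hLγ'entries]
      show (0 : ℤ) < (a + s * c) * ((N : ℤ) * m * (a + s * c) + c)
      have h1 : a + s * c = a' := by rw [ha']; ring
      rw [h1]
      have h2 : 1 ≤ a' ^ 2 := by
        rcases lt_or_gt_of_ne ha'ne with h' | h' <;> nlinarith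
      have h3 : -(a' * c) ≤ |a' * c| := neg_le_abs _
      have h4 : a' * ((N : ℤ) * m * a' + c) = (N : ℤ) * m * a' ^ 2 + a' * c := by ring
      rw [h4]
      have h6 : (1 : ℤ) ≤ (N : ℤ) * a' ^ 2 := by nlinarith
      have h5 : m * 1 ≤ m * ((N : ℤ) * a' ^ 2) :=
        mul_le_mul_of_nonneg_left h6 hmpos.le
      nlinarith
  -- conclude
  have hγ'P : P k f γ' := P_cancel (hLP m hmpos) hLγ'P
  exact P_cancel (hUP s) (hγ'def ▸ hγ'P)
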